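/- (a) ⋀H_ℂ = Λ^{2,0} ⊕ Λ^{1,1} ⊕ Λ^{0,2}. (b) For every h ∈ H^{2,0}: λ_h(Λ^{2,0}) = 0, λ_h(Λ^{1,1}) ⊆ Λ^{2,0}, and λ_h(Λ^{0,2}) ⊆ Λ^{1,1}. (c) For every h ∈ H^{1,1}: λ_h(Λ^{2,0}) ⊆ Λ^{2,0}, λ_h(Λ^{1,1}) ⊆ Λ^{1,1}, and λ_h(Λ^{0,2}) ⊆ Λ^{0,2}. (d) For every h ∈ H^{0,2}: λ_h(Λ^{0,2}) = 0, λ_h(Λ^{1,1}) ⊆ Λ^{0,2}, and λ_h(Λ^{2,0}) ⊆ Λ^{1,1}. Consequently the Clifford algebra of H, identified as a module with ⋀H, carries a weight 2 Hodge structure for which Clifford multiplication is a morphism of Hodge structures of bidegree (−1,−1). -/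

import Mathlib

open scoped TensorProduct

noncomputable section

variable (H : Type) [AddCommGroup H] [Module ℚ H] [FiniteDimensional ℚ H]

/-- The conjugate-linear involution of `H_ℂ = ℂ ⊗[ℚ] H` fixing `H`. -/
def sigmaM : ℂ ⊗[ℚ] H →ₗ[ℚ] ℂ ⊗[ℚ] H :=
  LinearMap.rTensor H (Complex.conjAe.toLinearMap.restrictScalars ℚ)

/-- The inclusion of `H` into `H_ℂ = ℂ ⊗[ℚ] H`. -/
def inclM : H →ₗ[ℚ] ℂ ⊗[ℚ] H := TensorProduct.mk ℚ ℂ H 1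

/-- A polarized weight 2 Hodge structure of `K3` type (`dim_ℂ H^{2,0} = 1`) on a
finite-dimensional `ℚ`-vector space `H`: a Hodge decomposition
`H_ℂ = H^{2,0} ⊕ H^{1,1} ⊕ H^{0,2}` with `σ(H^{2,0}) = H^{0,2}`, `σ(H^{1,1}) = H^{1,1}`,
and a symmetric bilinear form `B` on `H` with `ℂ`-bilinear extension `BC` whose Hermitian
pairing `h(α,β) := BC α (σ β)` makes the pieces pairwise orthogonal and is positive definite
on `H^{2,0}`, `H^{0,2}` and negative definite on `H^{1,1}`. -/
structure K3HodgeData where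
  H20 : Submodule ℂ (ℂ ⊗[ℚ] H)
  H11 : Submodule ℂ (ℂ ⊗[ℚ] H)
  H02 : Submodule ℂ (ℂ ⊗[ℚ] H)
  sup_top : H20 ⊔ H11 ⊔ H02 = ⊤
  disj1 : H20 ⊓ (H11 ⊔ H02) = ⊥
  disj2 : H11 ⊓ H02 = ⊥
  rank20 : Module.finrank ℂ H20 = 1
  sigma_20 : ∀ x ∈ H20, sigmaM H x ∈ H02
  sigma_02 : ∀ x ∈ H02, sigmaM H x ∈ H20
  sigma_11 : ∀ x ∈ H11, sigmaM H x ∈ H11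
  B : H →ₗ[ℚ] H →ₗ[ℚ] ℚ
  B_symm : ∀ a b : H, B a b = B b a
  BC : (ℂ ⊗[ℚ] H) →ₗ[ℂ] (ℂ ⊗[ℚ] H) →ₗ[ℂ] ℂ
  BC_extends : ∀ a b : H, BC (inclM H a) (inclM H b) = (B a b : ℂ)
  BC_symm : ∀ x y, BC x y = BC y x
  BC_conj : ∀ x y, BC (sigmaM H x) (sigmaM H y) = starRingEnd ℂ (BC x y)
  orth_20_11 : ∀ x ∈ H20, ∀ y ∈ H11, BC x (sigmaM H y) = 0
  orth_20_02 : ∀ x ∈ H20, ∀ y ∈ H02, BC x (sigmaM H y) = 0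
  orth_11_02 : ∀ x ∈ H11, ∀ y ∈ H02, BC x (sigmaM H y) = 0
  pos_20 : ∀ x ∈ H20, x ≠ 0 → 0 < (BC x (sigmaM H x)).re ∧ (BC x (sigmaM H x)).im = 0
  pos_02 : ∀ x ∈ H02, x ≠ 0 → 0 < (BC x (sigmaM H x)).re ∧ (BC x (sigmaM H x)).im = 0
  neg_11 : ∀ x ∈ H11, x ≠ 0 → (BC x (sigmaM H x)).re < 0 ∧ (BC x (sigmaM H x)).im = 0

variable {H}

/-- `⋀H^{1,1}`, the subalgebra of the exterior algebra `⋀H_ℂ` generated by `H^{1,1}`. -/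
def K3HodgeData.wedgeH11 (D : K3HodgeData H) : Subalgebra ℂ (ExteriorAlgebra ℂ (ℂ ⊗[ℚ] H)) :=
  Algebra.adjoin ℂ (ExteriorAlgebra.ι ℂ '' (D.H11 : Set (ℂ ⊗[ℚ] H)))

/-- `Λ^{2,0} := H^{2,0} ∧ (⋀H^{1,1})`. -/
def K3HodgeData.Lam20 (D : K3HodgeData H) : Submodule ℂ (ExteriorAlgebra ℂ (ℂ ⊗[ℚ] H)) :=
  Submodule.span ℂ {z | ∃ a ∈ D.H20, ∃ w ∈ D.wedgeH11, z = ExteriorAlgebra.ι ℂ a * w}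

/-- `Λ^{0,2} := H^{0,2} ∧ (⋀H^{1,1})`. -/
def K3HodgeData.Lam02 (D : K3HodgeData H) : Submodule ℂ (ExteriorAlgebra ℂ (ℂ ⊗[ℚ] H)) :=
  Submodule.span ℂ {z | ∃ a ∈ D.H02, ∃ w ∈ D.wedgeH11, z = ExteriorAlgebra.ι ℂ a * w}

/-- `Λ^{1,1} := (⋀H^{1,1}) + H^{2,0} ∧ (H^{0,2} ∧ (⋀H^{1,1}))`. -/
def K3HodgeData.Lam11 (D : K3HodgeData H) : Submodule ℂ (ExteriorAlgebra ℂ (ℂ ⊗[ℚ] H)) :=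
  Subalgebra.toSubmodule D.wedgeH11 ⊔
    Submodule.span ℂ {z | ∃ a ∈ D.H20, ∃ b ∈ D.H02, ∃ w ∈ D.wedgeH11,
      z = ExteriorAlgebra.ι ℂ a * (ExteriorAlgebra.ι ℂ b * w)}

/-- `λ_h(x) := h ∧ x − ι_{⟨h,·⟩}(x)`, left Clifford multiplication by `h` under the standard
module identification of the Clifford algebra of `(H_ℂ, −⟨,⟩)` with `⋀H_ℂ`. -/
def K3HodgeData.lam (D : K3HodgeData H) (h : ℂ ⊗[ℚ] H)
    (x : ExteriorAlgebra ℂ (ℂ ⊗[ℚ] H)) : ExteriorAlgebra ℂ (ℂ ⊗[ℚ] H) :=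
  ExteriorAlgebra.ι ℂ h * x - CliffordAlgebra.contractLeft (D.BC h) x

section Aux
set_option linter.unusedSectionVars false

lemma sigmaM_sigmaM (x : ℂ ⊗[ℚ] H) : sigmaM H (sigmaM H x) = x := by
  induction x using TensorProduct.induction_on with
  | zero => simp
  | tmul z m => simp [sigmaM]
  | add x y hx hy => simp [map_add, hx, hy]

lemma sigmaM_smul (c : ℂ) (x : ℂ ⊗[ℚ] H) :
    sigmaM H (c • x) = (starRingEnd ℂ c) • sigmaM H x := by
  induction x using TensorProduct.induction_on with
  | zero => simp
  | tmul z m =>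
      rw [TensorProduct.smul_tmul']
      simp [sigmaM, TensorProduct.smul_tmul', map_mul]
  | add x y hx hy => simp [map_add, smul_add, hx, hy]

namespace K3HodgeData
variable (D : K3HodgeData H)

lemma BC_20_20 {x y : ℂ ⊗[ℚ] H} (hx : x ∈ D.H20) (hy : y ∈ D.H20) : D.BC x y = 0 := by
  have := D.orth_20_02 x hx (sigmaM H y) (D.sigma_20 y hy)
  rwa [sigmaM_sigmaM] at this

lemma BC_20_11 {x y : ℂ ⊗[ℚ] H} (hx : x ∈ D.H20) (hy : y ∈ D.H11) : D.BC x y = 0 := by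
  have := D.orth_20_11 x hx (sigmaM H y) (D.sigma_11 y hy)
  rwa [sigmaM_sigmaM] at this

lemma BC_02_02 {x y : ℂ ⊗[ℚ] H} (hx : x ∈ D.H02) (hy : y ∈ D.H02) : D.BC x y = 0 := by
  have h := D.BC_conj x y
  rw [D.BC_20_20 (D.sigma_02 x hx) (D.sigma_02 y hy)] at h
  have := h.symm
  rwa [map_eq_zero] at this

lemma BC_02_11 {x y : ℂ ⊗[ℚ] H} (hx : x ∈ D.H02) (hy : y ∈ D.H11) : D.BC x y = 0 := by
  have h := D.BC_conj x y
  rw [D.BC_20_11 (D.sigma_02 x hx) (D.sigma_11 y hy)] at h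
  have := h.symm
  rwa [map_eq_zero] at this

lemma BC_11_20 {x y : ℂ ⊗[ℚ] H} (hx : x ∈ D.H11) (hy : y ∈ D.H20) : D.BC x y = 0 := by
  rw [D.BC_symm]; exact D.BC_20_11 hy hx

lemma BC_11_02 {x y : ℂ ⊗[ℚ] H} (hx : x ∈ D.H11) (hy : y ∈ D.H02) : D.BC x y = 0 := by
  rw [D.BC_symm]; exact D.BC_02_11 hy hx

/-- existence of a generator of H20 -/
lemma exists_gen : ∃ e ∈ D.H20, e ≠ 0 ∧ ∀ a ∈ D.H20, ∃ s : ℂ, a = s • e := by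
  have h1 : Module.finrank ℂ D.H20 = 1 := D.rank20
  rw [finrank_eq_one_iff'] at h1
  obtain ⟨v, hv0, hv⟩ := h1
  refine ⟨v.1, v.2, fun h => hv0 (Subtype.ext h), fun a ha => ?_⟩
  obtain ⟨c, hc⟩ := hv ⟨a, ha⟩
  exact ⟨c, congrArg Subtype.val hc.symm⟩

end K3HodgeData
end Aux
section Aux2
set_option linter.unusedSectionVars false
set_option maxHeartbeats 1000000
set_option synthInstance.maxHeartbeats 400000
namespace K3HodgeData
variable (D : K3HodgeData H)

local notation "ιe" => ExteriorAlgebra.ι ℂ (M := ℂ ⊗[ℚ] H)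

lemma ι_mem_wedge {h : ℂ ⊗[ℚ] H} (hh : h ∈ D.H11) : ιe h ∈ D.wedgeH11 :=
  Algebra.subset_adjoin ⟨h, hh, rfl⟩

lemma listProd_mem_wedge {l : List (ℂ ⊗[ℚ] H)} (hl : ∀ y ∈ l, y ∈ D.H11) :
    (l.map ιe).prod ∈ D.wedgeH11 := by
  induction l with
  | nil => simpa using one_mem _
  | cons a l ih =>
      rw [List.map_cons, List.prod_cons]
      exact mul_mem (D.ι_mem_wedge (hl a (List.mem_cons_self))) (ih fun y hy => hl y (List.mem_cons_of_mem _ hy))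

lemma exists_vec_list : ∀ l : List (ExteriorAlgebra ℂ (ℂ ⊗[ℚ] H)),
    (∀ y ∈ l, y ∈ ιe '' D.H11) →
    ∃ l' : List (ℂ ⊗[ℚ] H), (∀ y ∈ l', y ∈ D.H11) ∧ l.prod = (l'.map ιe).prod := by
  intro l hl
  induction l with
  | nil => exact ⟨[], by simp, by simp⟩
  | cons a l ih =>
      obtain ⟨l', h1, h2⟩ := ih fun y hy => hl y (List.mem_cons_of_mem _ hy)
      obtain ⟨v, hv, rfl⟩ := hl a (List.mem_cons_self)
      refine ⟨v :: l', ?_, by simp [h2]⟩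
      intro y hy
      rcases List.mem_cons.1 hy with h | h
      · exact h ▸ hv
      · exact h1 y h

lemma wedge_le_span_lists {w : ExteriorAlgebra ℂ (ℂ ⊗[ℚ] H)} (hw : w ∈ D.wedgeH11) :
    w ∈ Submodule.span ℂ {x | ∃ l : List (ℂ ⊗[ℚ] H), (∀ y ∈ l, y ∈ D.H11) ∧
      x = (l.map ιe).prod} := by
  have hw' : w ∈ Subalgebra.toSubmodule D.wedgeH11 := hw
  rw [wedgeH11, Algebra.adjoin_eq_span] at hw'
  refine Submodule.span_le.2 ?_ hw'
  intro m hm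
  obtain ⟨l, hl, rfl⟩ := Submonoid.exists_list_of_mem_closure hm
  obtain ⟨l', h1, h2⟩ := D.exists_vec_list l hl
  exact Submodule.subset_span ⟨l', h1, h2⟩

/-- Contraction maps `⋀H¹¹` into itself. -/
lemma contract_wedge_mem (d : Module.Dual ℂ (ℂ ⊗[ℚ] H))
    {w : ExteriorAlgebra ℂ (ℂ ⊗[ℚ] H)} (hw : w ∈ D.wedgeH11) :
    CliffordAlgebra.contractLeft d w ∈ D.wedgeH11 := by
  have hlist : ∀ l : List (ℂ ⊗[ℚ] H), (∀ y ∈ l, y ∈ D.H11) →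
      CliffordAlgebra.contractLeft d ((l.map ιe).prod) ∈ D.wedgeH11 := by
    intro l hl
    induction l with
    | nil => simpa using zero_mem _
    | cons a l ih =>
        rw [List.map_cons, List.prod_cons, CliffordAlgebra.contractLeft_ι_mul]
        have h1 := D.listProd_mem_wedge (fun y hy => hl y (List.mem_cons_of_mem _ hy))
        have h2 := ih fun y hy => hl y (List.mem_cons_of_mem _ hy)
        exact sub_mem (SMulMemClass.smul_mem _ h1)
          (mul_mem (D.ι_mem_wedge (hl a (List.mem_cons_self))) h2)
  have hsp := D.wedge_le_span_lists hw
  clear hw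
  induction hsp using Submodule.span_induction with
  | mem x hx => obtain ⟨l, h1, rfl⟩ := hx; exact hlist l h1
  | zero => simpa using zero_mem _
  | add x y _ _ hx hy => rw [map_add]; exact add_mem hx hy
  | smul c x _ hx => rw [map_smul]; exact SMulMemClass.smul_mem _ hx

/-- Contraction against a form vanishing on `H¹¹` kills `⋀H¹¹`. -/
lemma contract_wedge_zero (d : Module.Dual ℂ (ℂ ⊗[ℚ] H)) (hd : ∀ y ∈ D.H11, d y = 0)
    {w : ExteriorAlgebra ℂ (ℂ ⊗[ℚ] H)} (hw : w ∈ D.wedgeH11) :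
    CliffordAlgebra.contractLeft d w = 0 := by
  have hlist : ∀ l : List (ℂ ⊗[ℚ] H), (∀ y ∈ l, y ∈ D.H11) →
      CliffordAlgebra.contractLeft d ((l.map ιe).prod) = 0 := by
    intro l hl
    induction l with
    | nil => simp
    | cons a l ih =>
        rw [List.map_cons, List.prod_cons, CliffordAlgebra.contractLeft_ι_mul,
          hd a (hl a (List.mem_cons_self)), ih fun y hy => hl y (List.mem_cons_of_mem _ hy)]
        simp
  have hsp := D.wedge_le_span_lists hw
  clear hw
  induction hsp using Submodule.span_induction with
  | mem x hx => obtain ⟨l, h1, rfl⟩ := hx; exact hlist l h1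
  | zero => simp
  | add x y _ _ hx hy => rw [map_add, hx, hy, add_zero]
  | smul c x _ hx => rw [map_smul, hx, smul_zero]

end K3HodgeData
end Aux2
section Aux3
set_option linter.unusedSectionVars false
set_option maxHeartbeats 1000000
set_option synthInstance.maxHeartbeats 400000
namespace K3HodgeData
variable (D : K3HodgeData H)

local notation "ιe" => ExteriorAlgebra.ι ℂ (M := ℂ ⊗[ℚ] H)

lemma ι_anticomm (x y : ℂ ⊗[ℚ] H) : ιe x * ιe y = -(ιe y * ιe x) :=
  eq_neg_of_add_eq_zero_left (ExteriorAlgebra.ι_add_mul_swap x y)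

lemma ι_mul_colin {e a a' : ℂ ⊗[ℚ] H} (ha : ∃ s : ℂ, a = s • e) (ha' : ∃ s : ℂ, a' = s • e) :
    ιe a * ιe a' = 0 := by
  obtain ⟨s, rfl⟩ := ha; obtain ⟨t, rfl⟩ := ha'
  rw [map_smul, map_smul, smul_mul_assoc, mul_smul_comm, ExteriorAlgebra.ι_sq_zero]
  simp

lemma mem_Lam20 {a w} (ha : a ∈ D.H20) (hw : w ∈ D.wedgeH11) : ιe a * w ∈ D.Lam20 :=
  Submodule.subset_span ⟨a, ha, w, hw, rfl⟩

lemma mem_Lam02 {b w} (hb : b ∈ D.H02) (hw : w ∈ D.wedgeH11) : ιe b * w ∈ D.Lam02 :=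
  Submodule.subset_span ⟨b, hb, w, hw, rfl⟩

lemma wedge_mem_Lam11 {w} (hw : w ∈ D.wedgeH11) : w ∈ D.Lam11 :=
  Submodule.mem_sup_left hw

lemma mem_Lam11 {a b w} (ha : a ∈ D.H20) (hb : b ∈ D.H02) (hw : w ∈ D.wedgeH11) :
    ιe a * (ιe b * w) ∈ D.Lam11 :=
  Submodule.mem_sup_right (Submodule.subset_span ⟨a, ha, b, hb, w, hw, rfl⟩)

lemma Lam20_ind (T : ExteriorAlgebra ℂ (ℂ ⊗[ℚ] H) →ₗ[ℂ] ExteriorAlgebra ℂ (ℂ ⊗[ℚ] H))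
    (P : Submodule ℂ (ExteriorAlgebra ℂ (ℂ ⊗[ℚ] H)))
    (hgen : ∀ a ∈ D.H20, ∀ w ∈ D.wedgeH11, T (ιe a * w) ∈ P) :
    ∀ x ∈ D.Lam20, T x ∈ P := by
  intro x hx
  induction hx using Submodule.span_induction with
  | mem x hx => obtain ⟨a, ha, w, hw, rfl⟩ := hx; exact hgen a ha w hw
  | zero => rw [map_zero]; exact zero_mem _
  | add x y _ _ hx hy => rw [map_add]; exact add_mem hx hy
  | smul c x _ hx => rw [map_smul]; exact SMulMemClass.smul_mem _ hx

lemma Lam02_ind (T : ExteriorAlgebra ℂ (ℂ ⊗[ℚ] H) →ₗ[ℂ] ExteriorAlgebra ℂ (ℂ ⊗[ℚ] H))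
    (P : Submodule ℂ (ExteriorAlgebra ℂ (ℂ ⊗[ℚ] H)))
    (hgen : ∀ b ∈ D.H02, ∀ w ∈ D.wedgeH11, T (ιe b * w) ∈ P) :
    ∀ x ∈ D.Lam02, T x ∈ P := by
  intro x hx
  induction hx using Submodule.span_induction with
  | mem x hx => obtain ⟨b, hb, w, hw, rfl⟩ := hx; exact hgen b hb w hw
  | zero => rw [map_zero]; exact zero_mem _
  | add x y _ _ hx hy => rw [map_add]; exact add_mem hx hy
  | smul c x _ hx => rw [map_smul]; exact SMulMemClass.smul_mem _ hx

lemma Lam11_ind (T : ExteriorAlgebra ℂ (ℂ ⊗[ℚ] H) →ₗ[ℂ] ExteriorAlgebra ℂ (ℂ ⊗[ℚ] H))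
    (P : Submodule ℂ (ExteriorAlgebra ℂ (ℂ ⊗[ℚ] H)))
    (hwedge : ∀ w ∈ D.wedgeH11, T w ∈ P)
    (hgen : ∀ a ∈ D.H20, ∀ b ∈ D.H02, ∀ w ∈ D.wedgeH11, T (ιe a * (ιe b * w)) ∈ P) :
    ∀ x ∈ D.Lam11, T x ∈ P := by
  have hspan : ∀ z ∈ Submodule.span ℂ {z | ∃ a ∈ D.H20, ∃ b ∈ D.H02, ∃ w ∈ D.wedgeH11,
      z = ExteriorAlgebra.ι ℂ a * (ExteriorAlgebra.ι ℂ b * w)}, T z ∈ P := by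
    intro z hz
    induction hz using Submodule.span_induction with
    | mem x hx => obtain ⟨a, ha, b, hb, w, hw, rfl⟩ := hx; exact hgen a ha b hb w hw
    | zero => rw [map_zero]; exact zero_mem _
    | add x y _ _ hx hy => rw [map_add]; exact add_mem hx hy
    | smul c x _ hx => rw [map_smul]; exact SMulMemClass.smul_mem _ hx
  intro x hx
  rw [Lam11] at hx
  obtain ⟨y, hy, z, hz, rfl⟩ := Submodule.mem_sup.1 hx
  rw [map_add]
  exact add_mem (hwedge y hy) (hspan z hz)

/-- `λ_h` as a linear map. -/
def lamL (h : ℂ ⊗[ℚ] H) :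
    ExteriorAlgebra ℂ (ℂ ⊗[ℚ] H) →ₗ[ℂ] ExteriorAlgebra ℂ (ℂ ⊗[ℚ] H) :=
  LinearMap.mulLeft ℂ (ιe h) - CliffordAlgebra.contractLeft (D.BC h)

lemma lam_eq (h : ℂ ⊗[ℚ] H) (x : ExteriorAlgebra ℂ (ℂ ⊗[ℚ] H)) :
    D.lam h x = D.lamL h x := rfl

end K3HodgeData
end Aux3
section Aux4
set_option linter.unusedSectionVars false
set_option maxHeartbeats 1000000
set_option synthInstance.maxHeartbeats 400000
namespace K3HodgeData
variable (D : K3HodgeData H)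

local notation "ιe" => ExteriorAlgebra.ι ℂ (M := ℂ ⊗[ℚ] H)

lemma ι_swap_mul (x y : ℂ ⊗[ℚ] H) (w : ExteriorAlgebra ℂ (ℂ ⊗[ℚ] H)) :
    ιe x * (ιe y * w) = -(ιe y * (ιe x * w)) := by
  rw [← mul_assoc, ι_anticomm x y, neg_mul, mul_assoc]

lemma ι_mul_colin_mul {e a a' : ℂ ⊗[ℚ] H} (ha : ∃ s : ℂ, a = s • e) (ha' : ∃ s : ℂ, a' = s • e)
    (w : ExteriorAlgebra ℂ (ℂ ⊗[ℚ] H)) : ιe a * (ιe a' * w) = 0 := by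
  rw [← mul_assoc, ι_mul_colin ha ha', zero_mul]

lemma lamL_apply (h : ℂ ⊗[ℚ] H) (x : ExteriorAlgebra ℂ (ℂ ⊗[ℚ] H)) :
    D.lamL h x = ιe h * x - CliffordAlgebra.contractLeft (D.BC h) x := rfl

lemma exists_gen02 {e0 : ℂ ⊗[ℚ] H} (hgen : ∀ a ∈ D.H20, ∃ s : ℂ, a = s • e0) :
    ∀ b ∈ D.H02, ∃ t : ℂ, b = t • sigmaM H e0 := by
  intro b hb
  obtain ⟨s, hs⟩ := hgen _ (D.sigma_02 b hb)
  refine ⟨starRingEnd ℂ s, ?_⟩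
  conv_lhs => rw [← sigmaM_sigmaM b, hs, sigmaM_smul]

section B
variable {e0 h : ℂ ⊗[ℚ] H} (hgen : ∀ a ∈ D.H20, ∃ s : ℂ, a = s • e0) (hh : h ∈ D.H20)
include hgen hh

lemma lam20_on_20 : ∀ x ∈ D.Lam20, D.lam h x = 0 := by
  intro x hx
  rw [lam_eq, ← Submodule.mem_bot (R := ℂ)]
  refine D.Lam20_ind (D.lamL h) ⊥ ?_ x hx
  intro a ha w hw
  rw [Submodule.mem_bot, lamL_apply, CliffordAlgebra.contractLeft_ι_mul,
    D.contract_wedge_zero _ (fun y hy => D.BC_20_11 hh hy) hw,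
    D.BC_20_20 hh ha, ι_mul_colin_mul (hgen h hh) (hgen a ha)]
  simp

lemma lam20_on_11 : ∀ x ∈ D.Lam11, D.lam h x ∈ D.Lam20 := by
  intro x hx
  rw [lam_eq]
  refine D.Lam11_ind (D.lamL h) D.Lam20 ?_ ?_ x hx
  · intro w hw
    rw [lamL_apply, D.contract_wedge_zero _ (fun y hy => D.BC_20_11 hh hy) hw, sub_zero]
    exact D.mem_Lam20 hh hw
  · intro a ha b hb w hw
    rw [lamL_apply, CliffordAlgebra.contractLeft_ι_mul, CliffordAlgebra.contractLeft_ι_mul,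
      D.contract_wedge_zero _ (fun y hy => D.BC_20_11 hh hy) hw,
      D.BC_20_20 hh ha, ι_mul_colin_mul (hgen h hh) (hgen a ha)]
    simp only [zero_smul, mul_zero, sub_zero, zero_sub, sub_neg_eq_add, zero_add, mul_smul_comm]
    exact SMulMemClass.smul_mem _ (D.mem_Lam20 ha hw)

lemma lam20_on_02 : ∀ x ∈ D.Lam02, D.lam h x ∈ D.Lam11 := by
  intro x hx
  rw [lam_eq]
  refine D.Lam02_ind (D.lamL h) D.Lam11 ?_ x hx
  intro b hb w hw
  rw [lamL_apply, CliffordAlgebra.contractLeft_ι_mul,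
    D.contract_wedge_zero _ (fun y hy => D.BC_20_11 hh hy) hw, mul_zero, sub_zero]
  exact sub_mem (D.mem_Lam11 hh hb hw) (SMulMemClass.smul_mem _ (D.wedge_mem_Lam11 hw))

end B

section C
variable {h : ℂ ⊗[ℚ] H} (hh : h ∈ D.H11)
include hh

lemma lam11_on_20 : ∀ x ∈ D.Lam20, D.lam h x ∈ D.Lam20 := by
  intro x hx
  rw [lam_eq]
  refine D.Lam20_ind (D.lamL h) D.Lam20 ?_ x hx
  intro a ha w hw
  have key : D.lamL h (ιe a * w) =
      ιe a * (CliffordAlgebra.contractLeft (D.BC h) w - ιe h * w) := by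
    rw [lamL_apply, CliffordAlgebra.contractLeft_ι_mul, D.BC_11_20 hh ha, ι_swap_mul h a,
      mul_sub]
    noncomm_ring
    simp
  rw [key]
  exact D.mem_Lam20 ha (sub_mem (D.contract_wedge_mem _ hw) (mul_mem (D.ι_mem_wedge hh) hw))

lemma lam11_on_11 : ∀ x ∈ D.Lam11, D.lam h x ∈ D.Lam11 := by
  intro x hx
  rw [lam_eq]
  refine D.Lam11_ind (D.lamL h) D.Lam11 ?_ ?_ x hx
  · intro w hw
    rw [lamL_apply]
    exact D.wedge_mem_Lam11
      (sub_mem (mul_mem (D.ι_mem_wedge hh) hw) (D.contract_wedge_mem _ hw))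
  · intro a ha b hb w hw
    have key : D.lamL h (ιe a * (ιe b * w)) =
        ιe a * (ιe b * (ιe h * w - CliffordAlgebra.contractLeft (D.BC h) w)) := by
      rw [lamL_apply, CliffordAlgebra.contractLeft_ι_mul, CliffordAlgebra.contractLeft_ι_mul,
        D.BC_11_20 hh ha, D.BC_11_02 hh hb, ι_swap_mul h a, ι_swap_mul h b]
      simp only [zero_smul, zero_sub, mul_sub, mul_neg]
      noncomm_ring
    rw [key]
    exact D.mem_Lam11 ha hb
      (sub_mem (mul_mem (D.ι_mem_wedge hh) hw) (D.contract_wedge_mem _ hw))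

lemma lam11_on_02 : ∀ x ∈ D.Lam02, D.lam h x ∈ D.Lam02 := by
  intro x hx
  rw [lam_eq]
  refine D.Lam02_ind (D.lamL h) D.Lam02 ?_ x hx
  intro b hb w hw
  have key : D.lamL h (ιe b * w) =
      ιe b * (CliffordAlgebra.contractLeft (D.BC h) w - ιe h * w) := by
    rw [lamL_apply, CliffordAlgebra.contractLeft_ι_mul, D.BC_11_02 hh hb, ι_swap_mul h b,
      mul_sub]
    noncomm_ring
    simp
  rw [key]
  exact D.mem_Lam02 hb (sub_mem (D.contract_wedge_mem _ hw) (mul_mem (D.ι_mem_wedge hh) hw))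

end C

section D'
variable {e0 h : ℂ ⊗[ℚ] H} (hgen : ∀ a ∈ D.H20, ∃ s : ℂ, a = s • e0)
  (hgen2 : ∀ b ∈ D.H02, ∃ t : ℂ, b = t • sigmaM H e0) (hh : h ∈ D.H02)
include hgen2 hh

lemma lam02_on_02 : ∀ x ∈ D.Lam02, D.lam h x = 0 := by
  intro x hx
  rw [lam_eq, ← Submodule.mem_bot (R := ℂ)]
  refine D.Lam02_ind (D.lamL h) ⊥ ?_ x hx
  intro b hb w hw
  rw [Submodule.mem_bot, lamL_apply, CliffordAlgebra.contractLeft_ι_mul,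
    D.contract_wedge_zero _ (fun y hy => D.BC_02_11 hh hy) hw,
    D.BC_02_02 hh hb, ι_mul_colin_mul (hgen2 h hh) (hgen2 b hb)]
  simp

lemma lam02_on_11 : ∀ x ∈ D.Lam11, D.lam h x ∈ D.Lam02 := by
  intro x hx
  rw [lam_eq]
  refine D.Lam11_ind (D.lamL h) D.Lam02 ?_ ?_ x hx
  · intro w hw
    rw [lamL_apply, D.contract_wedge_zero _ (fun y hy => D.BC_02_11 hh hy) hw, sub_zero]
    exact D.mem_Lam02 hh hw
  · intro a ha b hb w hw
    rw [lamL_apply, CliffordAlgebra.contractLeft_ι_mul, CliffordAlgebra.contractLeft_ι_mul,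
      D.contract_wedge_zero _ (fun y hy => D.BC_02_11 hh hy) hw,
      D.BC_02_02 hh hb, ι_swap_mul h a, ι_mul_colin_mul (hgen2 h hh) (hgen2 b hb)]
    simp only [zero_smul, mul_zero, sub_zero, neg_zero, zero_sub]
    exact neg_mem (SMulMemClass.smul_mem _ (D.mem_Lam02 hb hw))

lemma lam02_on_20 : ∀ x ∈ D.Lam20, D.lam h x ∈ D.Lam11 := by
  intro x hx
  rw [lam_eq]
  refine D.Lam20_ind (D.lamL h) D.Lam11 ?_ x hx
  intro a ha w hw
  rw [lamL_apply, CliffordAlgebra.contractLeft_ι_mul,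
    D.contract_wedge_zero _ (fun y hy => D.BC_02_11 hh hy) hw, mul_zero, sub_zero,
    ι_swap_mul h a]
  exact sub_mem (neg_mem (D.mem_Lam11 ha hh hw)) (SMulMemClass.smul_mem _ (D.wedge_mem_Lam11 hw))

end D'
end K3HodgeData
end Aux4
section Aux5
set_option linter.unusedSectionVars false
set_option maxHeartbeats 1000000
set_option synthInstance.maxHeartbeats 400000
namespace K3HodgeData
variable (D : K3HodgeData H)

local notation "ιe" => ExteriorAlgebra.ι ℂ (M := ℂ ⊗[ℚ] H)

lemma Lam_sup_top : D.Lam20 ⊔ D.Lam11 ⊔ D.Lam02 = ⊤ := by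
  set S := D.Lam20 ⊔ D.Lam11 ⊔ D.Lam02 with hS
  have h20S : D.Lam20 ≤ S := le_sup_of_le_left le_sup_left
  have h11S : D.Lam11 ≤ S := le_sup_of_le_left le_sup_right
  have h02S : D.Lam02 ≤ S := le_sup_right
  obtain ⟨e0, he0, hne, hgen⟩ := D.exists_gen
  have hgen2 := D.exists_gen02 hgen
  have Sind : ∀ (T : ExteriorAlgebra ℂ (ℂ ⊗[ℚ] H) →ₗ[ℂ] ExteriorAlgebra ℂ (ℂ ⊗[ℚ] H)),
      (∀ u ∈ D.Lam20, T u ∈ S) → (∀ u ∈ D.Lam11, T u ∈ S) → (∀ u ∈ D.Lam02, T u ∈ S) →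
      ∀ x ∈ S, T x ∈ S := by
    intro T h1 h2 h3 x hx
    obtain ⟨y, hy, z, hz, rfl⟩ := Submodule.mem_sup.1 hx
    obtain ⟨u, hu, v, hv, rfl⟩ := Submodule.mem_sup.1 hy
    rw [map_add, map_add]
    exact add_mem (add_mem (h1 u hu) (h2 v hv)) (h3 z hz)
  have m20 : ∀ h ∈ D.H20, ∀ x ∈ S, ιe h * x ∈ S := by
    intro h hh
    refine Sind (LinearMap.mulLeft ℂ (ιe h)) ?_ ?_ ?_
    · refine D.Lam20_ind _ S ?_
      intro a ha w hw
      rw [LinearMap.mulLeft_apply, ι_mul_colin_mul (hgen h hh) (hgen a ha)]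
      exact zero_mem _
    · refine D.Lam11_ind _ S ?_ ?_
      · intro w hw
        rw [LinearMap.mulLeft_apply]
        exact h20S (D.mem_Lam20 hh hw)
      · intro a ha b hb w hw
        rw [LinearMap.mulLeft_apply, ι_mul_colin_mul (hgen h hh) (hgen a ha)]
        exact zero_mem _
    · refine D.Lam02_ind _ S ?_
      intro b hb w hw
      rw [LinearMap.mulLeft_apply]
      exact h11S (D.mem_Lam11 hh hb hw)
  have m11 : ∀ h ∈ D.H11, ∀ x ∈ S, ιe h * x ∈ S := by
    intro h hh
    refine Sind (LinearMap.mulLeft ℂ (ιe h)) ?_ ?_ ?_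
    · refine D.Lam20_ind _ S ?_
      intro a ha w hw
      rw [LinearMap.mulLeft_apply, ι_swap_mul h a]
      exact neg_mem (h20S (D.mem_Lam20 ha (mul_mem (D.ι_mem_wedge hh) hw)))
    · refine D.Lam11_ind _ S ?_ ?_
      · intro w hw
        rw [LinearMap.mulLeft_apply]
        exact h11S (D.wedge_mem_Lam11 (mul_mem (D.ι_mem_wedge hh) hw))
      · intro a ha b hb w hw
        rw [LinearMap.mulLeft_apply, ι_swap_mul h a, ι_swap_mul h b]
        simp only [mul_neg, neg_neg]
        exact h11S (D.mem_Lam11 ha hb (mul_mem (D.ι_mem_wedge hh) hw))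
    · refine D.Lam02_ind _ S ?_
      intro b hb w hw
      rw [LinearMap.mulLeft_apply, ι_swap_mul h b]
      exact neg_mem (h02S (D.mem_Lam02 hb (mul_mem (D.ι_mem_wedge hh) hw)))
  have m02 : ∀ h ∈ D.H02, ∀ x ∈ S, ιe h * x ∈ S := by
    intro h hh
    refine Sind (LinearMap.mulLeft ℂ (ιe h)) ?_ ?_ ?_
    · refine D.Lam20_ind _ S ?_
      intro a ha w hw
      rw [LinearMap.mulLeft_apply, ι_swap_mul h a]
      exact neg_mem (h11S (D.mem_Lam11 ha hh hw))
    · refine D.Lam11_ind _ S ?_ ?_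
      · intro w hw
        rw [LinearMap.mulLeft_apply]
        exact h02S (D.mem_Lam02 hh hw)
      · intro a ha b hb w hw
        rw [LinearMap.mulLeft_apply, ι_swap_mul h a, ι_mul_colin_mul (hgen2 h hh) (hgen2 b hb)]
        simp only [mul_zero, neg_zero]
        exact zero_mem _
    · refine D.Lam02_ind _ S ?_
      intro b hb w hw
      rw [LinearMap.mulLeft_apply, ι_mul_colin_mul (hgen2 h hh) (hgen2 b hb)]
      exact zero_mem _
  have mulS : ∀ v : ℂ ⊗[ℚ] H, ∀ x ∈ S, ιe v * x ∈ S := by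
    intro v x hx
    have hv : v ∈ D.H20 ⊔ D.H11 ⊔ D.H02 := by rw [D.sup_top]; trivial
    obtain ⟨y, hy, z, hz, rfl⟩ := Submodule.mem_sup.1 hv
    obtain ⟨u, hu, t, ht, rfl⟩ := Submodule.mem_sup.1 hy
    rw [map_add, map_add, add_mul, add_mul]
    exact add_mem (add_mem (m20 u hu x hx) (m11 t ht x hx)) (m02 z hz x hx)
  have key : ∀ a : ExteriorAlgebra ℂ (ℂ ⊗[ℚ] H), ∀ y ∈ S, a * y ∈ S := by
    intro a
    refine ExteriorAlgebra.induction ?_ ?_ ?_ ?_ a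
    · intro r y hy
      rw [← Algebra.smul_def]
      exact SMulMemClass.smul_mem _ hy
    · exact fun v => mulS v
    · intro a b ha hb y hy
      rw [mul_assoc]
      exact ha _ (hb y hy)
    · intro a b ha hb y hy
      rw [add_mul]
      exact add_mem (ha y hy) (hb y hy)
  rw [eq_top_iff]
  intro x _
  simpa using key x 1 (h11S (D.wedge_mem_Lam11 (one_mem _)))

end K3HodgeData
end Aux5
section Aux6
set_option linter.unusedSectionVars false
set_option maxHeartbeats 1000000
set_option synthInstance.maxHeartbeats 400000
namespace K3HodgeData
variable (D : K3HodgeData H)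

local notation "ιe" => ExteriorAlgebra.ι ℂ (M := ℂ ⊗[ℚ] H)

lemma Lam_disj : D.Lam20 ⊓ (D.Lam11 ⊔ D.Lam02) = ⊥ ∧ D.Lam11 ⊓ D.Lam02 = ⊥ := by
  obtain ⟨e0, he0, hne, hgen⟩ := D.exists_gen
  have hgen2 := D.exists_gen02 hgen
  set f0 := sigmaM H e0 with hf0def
  have hf0 : f0 ∈ D.H02 := D.sigma_20 e0 he0
  set c0 := D.BC e0 f0 with hc0def
  have hc0 : c0 ≠ 0 := by
    have hpos : 0 < c0.re := (D.pos_20 e0 he0 hne).1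
    intro h
    rw [h] at hpos
    simp at hpos
  set ψ : Module.Dual ℂ (ℂ ⊗[ℚ] H) := c0⁻¹ • (D.BC e0 : Module.Dual ℂ (ℂ ⊗[ℚ] H)) with hψdef
  set ψ' : Module.Dual ℂ (ℂ ⊗[ℚ] H) := c0⁻¹ • (D.BC f0 : Module.Dual ℂ (ℂ ⊗[ℚ] H)) with hψ'def
  have hψ11 : ∀ y ∈ D.H11, ψ y = 0 := fun y hy => by
    simp [hψdef, D.BC_20_11 he0 hy]
  have hψ20 : ∀ a ∈ D.H20, ψ a = 0 := fun a ha => by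
    simp [hψdef, D.BC_20_20 he0 ha]
  have hψf0 : ψ f0 = 1 := by
    simp only [hψdef, LinearMap.smul_apply, smul_eq_mul, ← hc0def]
    exact inv_mul_cancel₀ hc0
  have hψ'11 : ∀ y ∈ D.H11, ψ' y = 0 := fun y hy => by
    simp [hψ'def, D.BC_02_11 hf0 hy]
  have hψ'02 : ∀ b ∈ D.H02, ψ' b = 0 := fun b hb => by
    simp [hψ'def, D.BC_02_02 hf0 hb]
  have hψ'e0 : ψ' e0 = 1 := by
    simp only [hψ'def, LinearMap.smul_apply, smul_eq_mul, D.BC_symm f0 e0, ← hc0def]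
    exact inv_mul_cancel₀ hc0
  set dψ : ExteriorAlgebra ℂ (ℂ ⊗[ℚ] H) →ₗ[ℂ] ExteriorAlgebra ℂ (ℂ ⊗[ℚ] H) :=
    CliffordAlgebra.contractLeft (Q := (0 : QuadraticForm ℂ (ℂ ⊗[ℚ] H))) ψ with hdψ
  set dψ' : ExteriorAlgebra ℂ (ℂ ⊗[ℚ] H) →ₗ[ℂ] ExteriorAlgebra ℂ (ℂ ⊗[ℚ] H) :=
    CliffordAlgebra.contractLeft (Q := (0 : QuadraticForm ℂ (ℂ ⊗[ℚ] H))) ψ' with hdψ'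
  set me0 := LinearMap.mulLeft ℂ (ιe e0) with hme0
  set mf0 := LinearMap.mulLeft ℂ (ιe f0) with hmf0
  set π : ExteriorAlgebra ℂ (ℂ ⊗[ℚ] H) →ₗ[ℂ] ExteriorAlgebra ℂ (ℂ ⊗[ℚ] H) :=
    me0 ∘ₗ (dψ' ∘ₗ (LinearMap.id - mf0 ∘ₗ dψ)) with hπ
  set π' : ExteriorAlgebra ℂ (ℂ ⊗[ℚ] H) →ₗ[ℂ] ExteriorAlgebra ℂ (ℂ ⊗[ℚ] H) :=
    mf0 ∘ₗ (dψ ∘ₗ (LinearMap.id - me0 ∘ₗ dψ')) with hπ'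
  have πapp : ∀ x, π x = ιe e0 * (dψ' (x - ιe f0 * (dψ x))) := fun x => rfl
  have π'app : ∀ x, π' x = ιe f0 * (dψ (x - ιe e0 * (dψ' x))) := fun x => rfl
  have cψ : ∀ w ∈ D.wedgeH11, dψ w = 0 := fun w hw => D.contract_wedge_zero ψ hψ11 hw
  have cψ' : ∀ w ∈ D.wedgeH11, dψ' w = 0 := fun w hw => D.contract_wedge_zero ψ' hψ'11 hw
  have dψ_20 : ∀ (s : ℂ) (w), w ∈ D.wedgeH11 → dψ (ιe (s • e0) * w) = 0 := by
    intro s w hw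
    rw [hdψ, CliffordAlgebra.contractLeft_ι_mul, hψ20 _ (Submodule.smul_mem _ s he0), ← hdψ,
      cψ w hw]
    simp
  have dψ'_20 : ∀ (s : ℂ) (w), w ∈ D.wedgeH11 → dψ' (ιe (s • e0) * w) = s • w := by
    intro s w hw
    rw [hdψ', CliffordAlgebra.contractLeft_ι_mul, ← hdψ', cψ' w hw, map_smul, hψ'e0]
    simp
  have dψ_02 : ∀ (t : ℂ) (w), w ∈ D.wedgeH11 → dψ (ιe (t • f0) * w) = t • w := by
    intro t w hw
    rw [hdψ, CliffordAlgebra.contractLeft_ι_mul, ← hdψ, cψ w hw, map_smul, hψf0]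
    simp
  have dψ'_02 : ∀ (t : ℂ) (w), w ∈ D.wedgeH11 → dψ' (ιe (t • f0) * w) = 0 := by
    intro t w hw
    rw [hdψ', CliffordAlgebra.contractLeft_ι_mul, hψ'02 _ (Submodule.smul_mem _ t hf0), ← hdψ',
      cψ' w hw]
    simp
  have swap_ef : ∀ (s t : ℂ) (w : ExteriorAlgebra ℂ (ℂ ⊗[ℚ] H)),
      ιe f0 * (t • (ιe (s • e0) * w)) = -(ιe (s • e0) * (ιe (t • f0) * w)) := by
    intro s t w
    calc ιe f0 * (t • (ιe (s • e0) * w)) = t • (ιe f0 * (ιe (s • e0) * w)) :=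
          mul_smul_comm t _ _
      _ = t • (-(ιe (s • e0) * (ιe f0 * w))) := by rw [ι_swap_mul]
      _ = -(ιe (s • e0) * (t • (ιe f0 * w))) := by rw [mul_smul_comm, smul_neg]
      _ = -(ιe (s • e0) * (ιe (t • f0) * w)) := by rw [map_smul (ExteriorAlgebra.ι ℂ) t f0, smul_mul_assoc]
  have hπ20 : ∀ x ∈ D.Lam20, π x = x := by
    intro x hx
    have h := D.Lam20_ind (π - LinearMap.id) ⊥ ?_ x hx
    · rwa [Submodule.mem_bot, LinearMap.sub_apply, LinearMap.id_apply, sub_eq_zero] at h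
    intro a ha w hw
    obtain ⟨s, rfl⟩ := hgen a ha
    rw [Submodule.mem_bot, LinearMap.sub_apply, LinearMap.id_apply, sub_eq_zero, πapp,
      dψ_20 s w hw, mul_zero, sub_zero, dψ'_20 s w hw, mul_smul_comm, ← smul_mul_assoc,
      ← map_smul (ExteriorAlgebra.ι ℂ) s e0]
  have hπ11 : ∀ x ∈ D.Lam11, π x = 0 := by
    intro x hx
    have h := D.Lam11_ind π ⊥ ?_ ?_ x hx
    · rwa [Submodule.mem_bot] at h
    · intro w hw
      rw [Submodule.mem_bot, πapp, cψ w hw, mul_zero, sub_zero, cψ' w hw, mul_zero]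
    intro a ha b hb w hw
    obtain ⟨s, rfl⟩ := hgen a ha
    obtain ⟨t, hb'⟩ := hgen2 b hb
    subst hb'
    have hd : dψ (ιe (s • e0) * (ιe (t • f0) * w)) = -(ιe (s • e0) * (t • w)) := by
      rw [hdψ, CliffordAlgebra.contractLeft_ι_mul, hψ20 _ (Submodule.smul_mem _ s he0), ← hdψ,
        dψ_02 t w hw]
      simp
    rw [Submodule.mem_bot, πapp, hd, mul_neg, sub_neg_eq_add, mul_smul_comm t (ιe (s • e0)) w,
      swap_ef s t w, add_neg_cancel, map_zero, mul_zero]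
  have hπ02 : ∀ x ∈ D.Lam02, π x = 0 := by
    intro x hx
    have h := D.Lam02_ind π ⊥ ?_ x hx
    · rwa [Submodule.mem_bot] at h
    intro b hb w hw
    obtain ⟨t, hb'⟩ := hgen2 b hb
    subst hb'
    rw [Submodule.mem_bot, πapp, dψ_02 t w hw, mul_smul_comm, ← smul_mul_assoc,
      ← map_smul (ExteriorAlgebra.ι ℂ) t f0, sub_self, map_zero, mul_zero]
  have hπ'02 : ∀ x ∈ D.Lam02, π' x = x := by
    intro x hx
    have h := D.Lam02_ind (π' - LinearMap.id) ⊥ ?_ x hx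
    · rwa [Submodule.mem_bot, LinearMap.sub_apply, LinearMap.id_apply, sub_eq_zero] at h
    intro b hb w hw
    obtain ⟨t, hb'⟩ := hgen2 b hb
    subst hb'
    rw [Submodule.mem_bot, LinearMap.sub_apply, LinearMap.id_apply, sub_eq_zero, π'app,
      dψ'_02 t w hw, mul_zero, sub_zero, dψ_02 t w hw, mul_smul_comm, ← smul_mul_assoc,
      ← map_smul (ExteriorAlgebra.ι ℂ) t f0]
  have hπ'11 : ∀ x ∈ D.Lam11, π' x = 0 := by
    intro x hx
    have h := D.Lam11_ind π' ⊥ ?_ ?_ x hx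
    · rwa [Submodule.mem_bot] at h
    · intro w hw
      rw [Submodule.mem_bot, π'app, cψ' w hw, mul_zero, sub_zero, cψ w hw, mul_zero]
    intro a ha b hb w hw
    obtain ⟨s, rfl⟩ := hgen a ha
    obtain ⟨t, hb'⟩ := hgen2 b hb
    subst hb'
    have hd' : dψ' (ιe (s • e0) * (ιe (t • f0) * w)) = s • (ιe (t • f0) * w) := by
      rw [hdψ', CliffordAlgebra.contractLeft_ι_mul, ← hdψ', dψ'_02 t w hw, map_smul, hψ'e0]
      simp
    rw [Submodule.mem_bot, π'app, hd', mul_smul_comm s (ιe e0) _, ← smul_mul_assoc,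
      ← map_smul (ExteriorAlgebra.ι ℂ) s e0, sub_self, map_zero, mul_zero]
  constructor
  · rw [eq_bot_iff]
    rintro x hx
    obtain ⟨hx1, hx2⟩ := Submodule.mem_inf.1 hx
    obtain ⟨y, hy, z, hz, rfl⟩ := Submodule.mem_sup.1 hx2
    rw [Submodule.mem_bot]
    have h1 := hπ20 _ hx1
    rw [map_add, hπ11 y hy, hπ02 z hz, add_zero] at h1
    simpa using h1.symm
  · rw [eq_bot_iff]
    rintro x hx
    obtain ⟨hx1, hx2⟩ := Submodule.mem_inf.1 hx
    rw [Submodule.mem_bot]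
    have h1 := hπ'11 x hx1
    rwa [hπ'02 x hx2] at h1

end K3HodgeData
end Aux6
/-- (a) `⋀H_ℂ = Λ^{2,0} ⊕ Λ^{1,1} ⊕ Λ^{0,2}`; (b) Clifford multiplication
`λ_h` for `h ∈ H^{2,0}` kills `Λ^{2,0}` and maps `Λ^{1,1}` into `Λ^{2,0}` and `Λ^{0,2}`
into `Λ^{1,1}`; (c) for `h ∈ H^{1,1}` it preserves each piece; (d) for `h ∈ H^{0,2}` it
kills `Λ^{0,2}` and maps `Λ^{1,1}` into `Λ^{0,2}` and `Λ^{2,0}` into `Λ^{1,1}`.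
Consequently the Clifford algebra of `H`, identified as a module with `⋀H`, carries a weight
`2` Hodge structure for which Clifford multiplication is a morphism of Hodge structures of
bidegree `(−1,−1)`. -/
theorem clifford_hodge_structure (D : K3HodgeData H) :
    (D.Lam20 ⊔ D.Lam11 ⊔ D.Lam02 = ⊤ ∧
      D.Lam20 ⊓ (D.Lam11 ⊔ D.Lam02) = ⊥ ∧ D.Lam11 ⊓ D.Lam02 = ⊥) ∧
    (∀ h ∈ D.H20,
      (∀ x ∈ D.Lam20, D.lam h x = 0) ∧
      (∀ x ∈ D.Lam11, D.lam h x ∈ D.Lam20) ∧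
      (∀ x ∈ D.Lam02, D.lam h x ∈ D.Lam11)) ∧
    (∀ h ∈ D.H11,
      (∀ x ∈ D.Lam20, D.lam h x ∈ D.Lam20) ∧
      (∀ x ∈ D.Lam11, D.lam h x ∈ D.Lam11) ∧
      (∀ x ∈ D.Lam02, D.lam h x ∈ D.Lam02)) ∧
    (∀ h ∈ D.H02,
      (∀ x ∈ D.Lam02, D.lam h x = 0) ∧
      (∀ x ∈ D.Lam11, D.lam h x ∈ D.Lam02) ∧
      (∀ x ∈ D.Lam20, D.lam h x ∈ D.Lam11)) := by
  obtain ⟨e0, he0, hne, hgen⟩ := D.exists_gen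
  have hgen2 := D.exists_gen02 hgen
  refine ⟨⟨D.Lam_sup_top, D.Lam_disj.1, D.Lam_disj.2⟩, ?_, ?_, ?_⟩
  · intro h hh
    exact ⟨D.lam20_on_20 hgen hh, D.lam20_on_11 hgen hh, D.lam20_on_02 hgen hh⟩
  · intro h hh
    exact ⟨D.lam11_on_20 hh, D.lam11_on_11 hh, D.lam11_on_02 hh⟩
  · intro h hh
    exact ⟨D.lam02_on_02 hgen2 hh, D.lam02_on_11 hgen2 hh, D.lam02_on_20 hgen2 hh⟩
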